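/- On R^4 with the Poisson brackets from the group A_{4,2}^{-1} (P with nonzero entries P^{12} = p12 + p13 x4, P^{13} = p13, P^{23} = e^{2x4} p23, P^{24} = e^{x4} p24; P' with nonzero entries P'^{12} = p'_{12} + a23 x3 + a24 x4 + (a53 p13/p23) x3 x4, P'^{13} = (a53 p13/p23) x3, P'^{23} = a53 e^{2x4} x3, P'^{24} = e^{x4}(p'_{24} + a64 x4)), assume p13 p24 p23 ≠ 0. Then H1 = (p23 p'_{24} + a53 p24 x3 + a64 p23 x4)/(p23 p24) and H2 = (1/2)(a53^2 x3^2/p23^2 + (p'_{24} + a64 x4)^2/p24^2) satisfy {H1,H2} = 0 and {H1,H2}' = 0. -/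

import Mathlib

open scoped BigOperators

noncomputable def pd {m : ℕ} (μ : Fin m) (f : (Fin m → ℝ) → ℝ) (x : Fin m → ℝ) : ℝ :=
  fderiv ℝ f x (Pi.single μ 1)

/-- Poisson bracket associated to a bivector field `P`. -/
noncomputable def pbrk {m : ℕ} (P : (Fin m → ℝ) → Fin m → Fin m → ℝ)
    (f g : (Fin m → ℝ) → ℝ) (x : Fin m → ℝ) : ℝ :=
  ∑ μ, ∑ ν, P x μ ν * pd μ f x * pd ν g x

/-- Schouten bracket `[P,P]^{λμν}`. -/
noncomputable def schouten {m : ℕ} (P : (Fin m → ℝ) → Fin m → Fin m → ℝ)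
    (l μ ν : Fin m) (x : Fin m → ℝ) : ℝ :=
  ∑ ρ, (P x ρ l * pd ρ (fun y => P y μ ν) x
      + P x ρ ν * pd ρ (fun y => P y l μ) x
      + P x ρ μ * pd ρ (fun y => P y ν l) x)

/-- Mixed Schouten bracket `[P,Q]^{λμν}`. -/
noncomputable def schoutenMixed {m : ℕ} (P Q : (Fin m → ℝ) → Fin m → Fin m → ℝ)
    (l μ ν : Fin m) (x : Fin m → ℝ) : ℝ :=
  ∑ ρ, (P x ρ l * pd ρ (fun y => Q y μ ν) x + Q x ρ l * pd ρ (fun y => P y μ ν) x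
      + P x ρ ν * pd ρ (fun y => Q y l μ) x + Q x ρ ν * pd ρ (fun y => P y l μ) x
      + P x ρ μ * pd ρ (fun y => Q y ν l) x + Q x ρ μ * pd ρ (fun y => P y ν l) x)

/-- The Poisson bivector `P` on the group `A_{4,2}^{-1}`. -/
noncomputable def P42 (p12 p13 p23 p24 : ℝ) : (Fin 4 → ℝ) → Fin 4 → Fin 4 → ℝ :=
  fun x μ ν =>
    let A := p12 + p13 * x 3
    let B := Real.exp (2 * x 3) * p23
    let C := Real.exp (x 3) * p24
    !![0, A, p13, 0;
       -A, 0, B, C;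
       -p13, -B, 0, 0;
       0, -C, 0, 0] μ ν

/-- The Poisson bivector `P'` on the group `A_{4,2}^{-1}`. -/
noncomputable def P42' (p13 p23 p12' p24' a23 a24 a53 a64 : ℝ) :
    (Fin 4 → ℝ) → Fin 4 → Fin 4 → ℝ :=
  fun x μ ν =>
    let A := p12' + a23 * x 2 + a24 * x 3 + a53 * p13 / p23 * x 2 * x 3
    let B := a53 * p13 / p23 * x 2
    let C := a53 * Real.exp (2 * x 3) * x 2
    let D := Real.exp (x 3) * (p24' + a64 * x 3)
    !![0, A, B, 0;
       -A, 0, C, D;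
       -B, -C, 0, 0;
       0, -D, 0, 0] μ ν



lemma pdH1 (p23 p24 p24' a53 a64 : ℝ) (μ : Fin 4) (x : Fin 4 → ℝ) :
    pd μ (fun x : Fin 4 → ℝ =>
      (p23 * p24' + a53 * p24 * x 2 + a64 * p23 * x 3) / (p23 * p24)) x
    = (a53 * p24 * (if μ = 2 then (1:ℝ) else 0)
      + a64 * p23 * (if μ = 3 then (1:ℝ) else 0)) / (p23 * p24) := by
  have h2 := hasFDerivAt_apply (𝕜 := ℝ) (2 : Fin 4) x
  have h3 := hasFDerivAt_apply (𝕜 := ℝ) (3 : Fin 4) x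
  have hfg : (fun x : Fin 4 → ℝ =>
      (p23 * p24' + a53 * p24 * x 2 + a64 * p23 * x 3) / (p23 * p24))
      = (fun x : Fin 4 → ℝ => (p23 * p24) ⁻¹ * (p23 * p24')
        + (p23 * p24)⁻¹ * (a53 * p24) * x 2 + (p23 * p24)⁻¹ * (a64 * p23) * x 3) := by
    funext y; ring
  have h := ((hasFDerivAt_const ((p23 * p24)⁻¹ * (p23 * p24')) x).add
      (h2.const_mul ((p23 * p24)⁻¹ * (a53 * p24)))).add
      (h3.const_mul ((p23 * p24)⁻¹ * (a64 * p23)))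
  rw [pd, hfg]
  erw [h.fderiv]
  simp [Pi.single_apply]
  by_cases h1 : μ = 2 <;> by_cases h2 : μ = 3 <;> simp [h1, h2, eq_comm] <;> ring

lemma pdH2 (p23 p24 p24' a53 a64 : ℝ) (μ : Fin 4) (x : Fin 4 → ℝ) :
    pd μ (fun x : Fin 4 → ℝ =>
      (1 / 2) * (a53 ^ 2 * (x 2) ^ 2 / p23 ^ 2 + (p24' + a64 * x 3) ^ 2 / p24 ^ 2)) x
    = a53 ^ 2 * x 2 / p23 ^ 2 * (if μ = 2 then (1:ℝ) else 0)
      + a64 * (p24' + a64 * x 3) / p24 ^ 2 * (if μ = 3 then (1:ℝ) else 0) := by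
  have h2 := hasFDerivAt_apply (𝕜 := ℝ) (2 : Fin 4) x
  have h3 := hasFDerivAt_apply (𝕜 := ℝ) (3 : Fin 4) x
  have hfg : (fun x : Fin 4 → ℝ =>
      (1 / 2) * (a53 ^ 2 * (x 2) ^ 2 / p23 ^ 2 + (p24' + a64 * x 3) ^ 2 / p24 ^ 2))
      = (fun x : Fin 4 → ℝ =>
        ((2:ℝ)⁻¹ * (p23 ^ 2)⁻¹ * a53 ^ 2) * (x 2 * x 2)
        + ((2:ℝ)⁻¹ * (p24 ^ 2)⁻¹) * ((p24' + a64 * x 3) * (p24' + a64 * x 3))) := by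
    funext y; ring
  have hg : HasFDerivAt (fun y : Fin 4 → ℝ => p24' + a64 * y 3) _ x :=
    (hasFDerivAt_const p24' x).add (h3.const_mul a64)
  have h := (((h2.mul h2).const_mul ((2:ℝ)⁻¹ * (p23 ^ 2)⁻¹ * a53 ^ 2)).add
      ((hg.mul hg).const_mul ((2:ℝ)⁻¹ * (p24 ^ 2)⁻¹)))
  rw [pd, hfg]
  erw [h.fderiv]
  simp [Pi.single_apply]
  by_cases h1 : μ = 2 <;> by_cases h2 : μ = 3 <;> simp [h1, h2, eq_comm] <;> ring

theorem A42_bi_involution (p12 p13 p23 p24 p12' p24' a23 a24 a53 a64 : ℝ)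
    (hne : p13 * p24 * p23 ≠ 0) :
    let H1 : (Fin 4 → ℝ) → ℝ := fun x =>
      (p23 * p24' + a53 * p24 * x 2 + a64 * p23 * x 3) / (p23 * p24)
    let H2 : (Fin 4 → ℝ) → ℝ := fun x =>
      (1 / 2) * (a53 ^ 2 * (x 2) ^ 2 / p23 ^ 2 + (p24' + a64 * x 3) ^ 2 / p24 ^ 2)
    (∀ x, pbrk (P42 p12 p13 p23 p24) H1 H2 x = 0) ∧
    (∀ x, pbrk (P42' p13 p23 p12' p24' a23 a24 a53 a64) H1 H2 x = 0) := by
  intro H1 H2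
  constructor <;> intro x <;>
    · simp only [pbrk, Fin.sum_univ_four, H1, H2, pdH1, pdH2]
      simp [P42, P42', Matrix.cons_val_zero, Matrix.cons_val_one, Matrix.head_cons, Matrix.vecHead, Matrix.vecTail]
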